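/- Let r ≥ 3 and n₁ ≥ n₂ ≥ ⋯ ≥ n_r ≥ 1. For any edge-coloring of the complete r-partite graph K_{n₁,n₂,…,n_r}, if there is a rainbow multipartite cycle, then there is a rainbow 3-cycle. -/

import Mathlib

namespace RainbowAux

variable {V : Type*}

/-- Cyclic consecutive pairs of a list. -/
def pairs (l : List V) : List (V × V) := l.zip (l.rotate 1)

lemma pairs_length (l : List V) : (pairs l).length = l.length := by
  simp [pairs]

lemma pairs_rotate_one (l : List V) :
    pairs (l.rotate 1) = (pairs l).rotate 1 := by
  match l with
  | [] => simp [pairs]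
  | [a] => simp [pairs]
  | a :: b :: s =>
    have h1 : (a :: b :: s).rotate 1 = b :: (s ++ [a]) := by
      simp [List.rotate_cons_succ]
    have h2 : (b :: (s ++ [a])).rotate 1 = (s ++ [a]) ++ [b] := by
      simp [List.rotate_cons_succ]
    have e3 : (a :: b :: s).zip (b :: (s ++ [a])) = (a, b) :: (b :: s).zip (s ++ [a]) := rfl
    have hlen : (b :: s).length = (s ++ [a]).length := by simp
    rw [pairs, pairs, h1, h2, e3]
    have e1 : (b :: (s ++ [a])) = (b :: s) ++ [a] := by simp
    rw [e1, List.zip_append hlen, List.rotate_cons_succ, List.rotate_zero]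
    simp

lemma pairs_rotate (l : List V) (m : ℕ) :
    pairs (l.rotate m) = (pairs l).rotate m := by
  induction m with
  | zero => simp
  | succ m ih =>
    have : l.rotate (m + 1) = (l.rotate m).rotate 1 := by
      rw [List.rotate_rotate]
    rw [this, pairs_rotate_one, ih, List.rotate_rotate]

lemma getElem_pairs (l : List V) (i : ℕ) (hi : i < l.length) :
    (pairs l)[i]'(by simpa [pairs_length] using hi) =
      (l[i], l[(i + 1) % l.length]'(Nat.mod_lt _ (Nat.lt_of_le_of_lt (Nat.zero_le _) hi))) := by
  simp only [pairs, List.getElem_zip, List.getElem_rotate]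



namespace Core

lemma exists_triple {I : Type*} (g : ℕ → I)
    (hadj : ∀ i, g i ≠ g (i + 1))
    (hsub : ∀ a b : I, ∃ i, g i ≠ a ∧ g i ≠ b) :
    ∃ i, g i ≠ g (i + 1) ∧ g (i + 1) ≠ g (i + 2) ∧ g i ≠ g (i + 2) := by
  by_contra hcon
  push_neg at hcon
  have h2 : ∀ i, g (i + 2) = g i := fun i => (hcon i (hadj i) (hadj (i + 1))).symm
  have heven : ∀ t i, g (i + 2 * t) = g i := by
    intro t
    induction t with
    | zero => simp
    | succ t ih =>
      intro i
      have e : i + 2 * (t + 1) = (i + 2) + 2 * t := by ring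
      rw [e, ih (i + 2), h2]
  have hmod : ∀ i, g i = g (i % 2) := by
    intro i
    conv_lhs => rw [show i = i % 2 + 2 * (i / 2) by omega]
    exact heven _ _
  obtain ⟨i, hi0, hi1⟩ := hsub (g 0) (g 1)
  rcases Nat.mod_two_eq_zero_or_one i with h | h
  · exact hi0 (by rw [hmod i, h])
  · exact hi1 (by rw [hmod i, h])

end Core


set_option maxHeartbeats 1000000 in
lemma step {V I α : Type*} [DecidableEq I] (f : V → I) (c : Sym2 V → α) (N : ℕ)
    (IH : ∀ l' : List V, l'.length ≤ N →
      (∀ p ∈ pairs l', f p.1 ≠ f p.2) →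
      ((pairs l').map (fun p => c s(p.1, p.2))).Nodup →
      3 ≤ (l'.map f).toFinset.card →
      ∃ a b d : V, f a ≠ f b ∧ f b ≠ f d ∧ f a ≠ f d ∧
        c s(a,b) ≠ c s(b,d) ∧ c s(b,d) ≠ c s(d,a) ∧ c s(a,b) ≠ c s(d,a))
    (x y z w : V) (rest : List V)
    (hN : (x::y::z::w::rest : List V).length ≤ N + 1)
    (hadj : ∀ p ∈ pairs (x::y::z::w::rest), f p.1 ≠ f p.2)
    (hnod : ((pairs (x::y::z::w::rest)).map (fun p => c s(p.1, p.2))).Nodup)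
    (hxy : f x ≠ f y) (hyz : f y ≠ f z) (hxz : f x ≠ f z) :
    ∃ a b d : V, f a ≠ f b ∧ f b ≠ f d ∧ f a ≠ f d ∧
      c s(a,b) ≠ c s(b,d) ∧ c s(b,d) ≠ c s(d,a) ∧ c s(a,b) ≠ c s(d,a) := by
  have hp : pairs (x::y::z::w::rest) =
      (x,y)::(y,z)::(z,w)::((w :: rest).zip (rest ++ [x])) := by
    simp [pairs, List.rotate_cons_succ]
  rw [hp] at hadj hnod
  simp only [List.map_cons, List.nodup_cons, List.mem_cons, not_or] at hnod
  obtain ⟨⟨h12, h13, h1M⟩, ⟨h23, h2M⟩, h3M, hMnod⟩ := hnod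
  by_cases hA : c s(x,z) ≠ c s(x,y) ∧ c s(x,z) ≠ c s(y,z)
  · refine ⟨x, y, z, hxy, hyz, hxz, h12, ?_, ?_⟩
    · rw [show s(z,x) = s(x,z) from Sym2.eq_swap]; exact Ne.symm hA.2
    · rw [show s(z,x) = s(x,z) from Sym2.eq_swap]; exact Ne.symm hA.1
  · have hOr : c s(x,z) = c s(x,y) ∨ c s(x,z) = c s(y,z) := by
      by_cases h : c s(x,z) = c s(x,y)
      · exact Or.inl h
      · push_neg at hA; exact Or.inr (hA h)
    have hch3 : c s(x,z) ≠ c s(z,w) := by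
      rcases hOr with h | h <;> rw [h]
      · exact h13
      · exact h23
    have hchM : c s(x,z) ∉ ((w :: rest).zip (rest ++ [x])).map (fun p => c s(p.1, p.2)) := by
      rcases hOr with h | h <;> rw [h]
      · exact h1M
      · exact h2M
    have hp2 : pairs (x::z::w::rest) =
        (x,z)::(z,w)::((w :: rest).zip (rest ++ [x])) := by
      simp [pairs, List.rotate_cons_succ]
    have hadj₂ : ∀ p ∈ pairs (x::z::w::rest), f p.1 ≠ f p.2 := by
      rw [hp2]
      intro p hp'
      simp only [List.mem_cons] at hp'
      rcases hp' with rfl | rfl | hpS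
      · exact hxz
      · exact hadj (z, w) (by simp)
      · exact hadj p (by simp [hpS])
    have hnod₂ : ((pairs (x::z::w::rest)).map (fun p => c s(p.1, p.2))).Nodup := by
      rw [hp2]
      simp only [List.map_cons, List.nodup_cons, List.mem_cons, not_or]
      exact ⟨⟨hch3, hchM⟩, h3M, hMnod⟩
    by_cases hc2 : 3 ≤ ((x::z::w::rest : List V).map f).toFinset.card
    · exact IH (x::z::w::rest) (by simp at hN ⊢; omega) hadj₂ hnod₂ hc2
    · push_neg at hc2
      have hABsub : ∀ v ∈ (x::z::w::rest : List V), f v = f x ∨ f v = f z := by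
        intro v hv
        have hmem : f v ∈ ((x::z::w::rest : List V).map f).toFinset := by
          rw [List.mem_toFinset]
          exact List.mem_map.2 ⟨v, hv, rfl⟩
        have hsub2 : ({f x, f z} : Finset I) ⊆ ((x::z::w::rest : List V).map f).toFinset := by
          intro a ha
          rw [List.mem_toFinset]
          rcases Finset.mem_insert.1 ha with rfl | ha'
          · exact List.mem_map.2 ⟨x, by simp, rfl⟩
          · rw [Finset.mem_singleton] at ha'
            subst ha'
            exact List.mem_map.2 ⟨z, by simp, rfl⟩
        have hcardpair : ({f x, f z} : Finset I).card = 2 := Finset.card_pair hxz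
        have heq : ({f x, f z} : Finset I) = ((x::z::w::rest : List V).map f).toFinset :=
          Finset.eq_of_subset_of_card_le hsub2 (by omega)
        rw [← heq] at hmem
        rcases Finset.mem_insert.1 hmem with h | h
        · exact Or.inl h
        · exact Or.inr (Finset.mem_singleton.1 h)
      have hfw : f w = f x := by
        have h1 : f z ≠ f w := hadj (z, w) (by simp)
        rcases hABsub w (by simp) with h | h
        · exact h
        · exact absurd h.symm h1
      cases rest with
      | nil =>
        exact absurd hfw (hadj (w, x) (by simp))
      | cons r rest' =>
        have hwr : f w ≠ f r := hadj (w, r) (by simp)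
        have hfr : f r = f z := by
          rcases hABsub r (by simp) with h | h
          · exact absurd (hfw.trans h.symm) hwr
          · exact h
        by_cases hB : c s(y,w) ≠ c s(y,z) ∧ c s(y,w) ≠ c s(z,w)
        · refine ⟨y, z, w, hyz, ?_, ?_, h23, ?_, ?_⟩
          · rw [hfw]; exact Ne.symm hxz
          · rw [hfw]; exact Ne.symm hxy
          · rw [show s(w,y) = s(y,w) from Sym2.eq_swap]; exact Ne.symm hB.2
          · rw [show s(w,y) = s(y,w) from Sym2.eq_swap]; exact Ne.symm hB.1
        · have hBOr : c s(y,w) = c s(y,z) ∨ c s(y,w) = c s(z,w) := by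
            by_cases h : c s(y,w) = c s(y,z)
            · exact Or.inl h
            · push_neg at hB; exact Or.inr (hB h)
          have hyw1 : c s(x,y) ≠ c s(y,w) := by
            rcases hBOr with h | h <;> rw [h]
            · exact h12
            · exact h13
          have hywM : c s(y,w) ∉
              ((w :: r :: rest').zip ((r :: rest') ++ [x])).map (fun p => c s(p.1, p.2)) := by
            rcases hBOr with h | h <;> rw [h]
            · exact h2M
            · exact h3M
          have hp3 : pairs (x::y::w::r::rest') =
              (x,y)::(y,w)::((w :: r :: rest').zip ((r :: rest') ++ [x])) := by
            simp [pairs, List.rotate_cons_succ]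
          have hadj₃ : ∀ p ∈ pairs (x::y::w::r::rest'), f p.1 ≠ f p.2 := by
            rw [hp3]
            intro p hp'
            simp only [List.mem_cons] at hp'
            rcases hp' with rfl | rfl | hpS
            · exact hxy
            · show f y ≠ f w
              rw [hfw]; exact fun h => hxy h.symm
            · exact hadj p (by simp only [List.zip_cons_cons, List.mem_cons] at hpS ⊢; tauto)
          have hnod₃ : ((pairs (x::y::w::r::rest')).map (fun p => c s(p.1, p.2))).Nodup := by
            rw [hp3]
            simp only [List.map_cons, List.nodup_cons, List.mem_cons, not_or]
            exact ⟨⟨hyw1, h1M⟩, hywM, hMnod⟩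
          have hcard₃ : 3 ≤ ((x::y::w::r::rest' : List V).map f).toFinset.card := by
            have hsub3 : ({f x, f y, f r} : Finset I) ⊆
                ((x::y::w::r::rest' : List V).map f).toFinset := by
              intro a ha
              rw [List.mem_toFinset]
              rcases Finset.mem_insert.1 ha with rfl | ha'
              · exact List.mem_map.2 ⟨x, by simp, rfl⟩
              · rcases Finset.mem_insert.1 ha' with rfl | ha''
                · exact List.mem_map.2 ⟨y, by simp, rfl⟩
                · rw [Finset.mem_singleton] at ha''
                  subst ha''
                  exact List.mem_map.2 ⟨r, by simp, rfl⟩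
            have hc3 : ({f x, f y, f r} : Finset I).card = 3 := by
              rw [Finset.card_insert_of_notMem, Finset.card_insert_of_notMem,
                Finset.card_singleton]
              · simp only [Finset.mem_singleton]
                rw [hfr]; exact hyz
              · simp only [Finset.mem_insert, Finset.mem_singleton, not_or]
                exact ⟨hxy, by rw [hfr]; exact hxz⟩
            calc 3 = ({f x, f y, f r} : Finset I).card := hc3.symm
              _ ≤ _ := Finset.card_le_card hsub3
          exact IH (x::y::w::r::rest') (by simp at hN ⊢; omega) hadj₃ hnod₃ hcard₃



set_option maxHeartbeats 1000000 in
lemma core {V I α : Type*} [DecidableEq I] (f : V → I) (c : Sym2 V → α) :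
    ∀ (N : ℕ) (l : List V), l.length ≤ N →
      (∀ p ∈ pairs l, f p.1 ≠ f p.2) →
      ((pairs l).map (fun p => c s(p.1, p.2))).Nodup →
      3 ≤ (l.map f).toFinset.card →
      ∃ a b d : V, f a ≠ f b ∧ f b ≠ f d ∧ f a ≠ f d ∧
        c s(a,b) ≠ c s(b,d) ∧ c s(b,d) ≠ c s(d,a) ∧ c s(a,b) ≠ c s(d,a) := by
  intro N
  induction N with
  | zero =>
    intro l hlen _ _ hcard
    exfalso
    have h1 := List.toFinset_card_le (l.map f)
    rw [List.length_map] at h1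
    omega
  | succ N IH =>
    intro l hlen hadj hnod hcard
    have hk3 : 3 ≤ l.length := by
      have h1 := List.toFinset_card_le (l.map f)
      rw [List.length_map] at h1
      omega
    have hk0 : 0 < l.length := by omega
    rcases Nat.lt_or_ge l.length 4 with h4 | h4
    · -- length exactly 3
      have h3 : l.length = 3 := by omega
      obtain ⟨x, y, z, rfl⟩ : ∃ x y z : V, l = [x, y, z] := by
        match l, h3 with
        | [x, y, z], _ => exact ⟨x, y, z, rfl⟩
      have hp : pairs [x,y,z] = [(x,y),(y,z),(z,x)] := by
        simp [pairs, List.rotate_cons_succ]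
      rw [hp] at hadj hnod
      simp only [List.map_cons, List.map_nil, List.nodup_cons, List.mem_cons,
        List.mem_singleton, List.not_mem_nil, not_or] at hnod
      refine ⟨x, y, z, hadj (x,y) (by simp), hadj (y,z) (by simp),
        Ne.symm (hadj (z,x) (by simp)), ?_, ?_, ?_⟩
      · exact hnod.1.1
      · exact hnod.2.1.1
      · exact hnod.1.2.1
    · -- length >= 4
      have hadjg : ∀ i : ℕ, f (l[i % l.length]'(Nat.mod_lt _ hk0)) ≠
          f (l[(i+1) % l.length]'(Nat.mod_lt _ hk0)) := by
        intro i
        have e1' : (i % l.length + 1) % l.length = (i + 1) % l.length := by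
          have h1 : 1 % l.length = 1 := Nat.mod_eq_of_lt (by omega)
          rw [Nat.add_mod i 1 l.length, h1]
        have hmem : (l[i % l.length]'(Nat.mod_lt _ hk0),
            l[(i % l.length + 1) % l.length]'(Nat.mod_lt _ hk0)) ∈ pairs l := by
          rw [← getElem_pairs l (i % l.length) (Nat.mod_lt _ hk0)]
          exact List.getElem_mem _
        have key := hadj _ hmem
        simp only [e1'] at key
        exact key
      have hsubg : ∀ a b : I, ∃ i : ℕ, f (l[i % l.length]'(Nat.mod_lt _ hk0)) ≠ a ∧
          f (l[i % l.length]'(Nat.mod_lt _ hk0)) ≠ b := by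
        intro a b
        by_contra hcon
        push_neg at hcon
        have hsub : (l.map f).toFinset ⊆ {a, b} := by
          intro v hv
          rw [List.mem_toFinset] at hv
          obtain ⟨u, hu, rfl⟩ := List.mem_map.1 hv
          obtain ⟨j, hj, rfl⟩ := List.mem_iff_getElem.1 hu
          have hj' : j % l.length = j := Nat.mod_eq_of_lt hj
          have hcj := hcon j
          simp only [hj'] at hcj
          rcases Classical.em (f (l[j]'hj) = a) with h | h
          · rw [h]; exact Finset.mem_insert_self _ _
          · rw [hcj h]; simp
        have h2 := Finset.card_le_card hsub
        have h3 : ({a, b} : Finset I).card ≤ 2 :=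
          (Finset.card_insert_le _ _).trans (by simp)
        omega
      obtain ⟨i, ht1, ht2, ht3⟩ :=
        Core.exists_triple (fun i => f (l[i % l.length]'(Nat.mod_lt _ hk0))) hadjg hsubg
      have e0 : (0 + i % l.length) % l.length = i % l.length := by
        rw [Nat.zero_add, Nat.mod_mod_of_dvd _ dvd_rfl]
      have e1 : (1 + i % l.length) % l.length = (i + 1) % l.length := by
        rw [Nat.add_comm i 1, Nat.add_mod 1 i l.length,
          Nat.mod_eq_of_lt (show 1 < l.length by omega)]
      have e2 : (2 + i % l.length) % l.length = (i + 2) % l.length := by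
        rw [Nat.add_comm i 2, Nat.add_mod 2 i l.length,
          Nat.mod_eq_of_lt (show 2 < l.length by omega)]
      obtain ⟨x, y, z, w, rest, hl'⟩ :
          ∃ x y z w rest, l.rotate (i % l.length) = x::y::z::w::rest := by
        have hlen' : (l.rotate (i % l.length)).length = l.length :=
          List.length_rotate l _
        rcases hrot : l.rotate (i % l.length) with _|⟨x, _|⟨y, _|⟨z, _|⟨w, rest⟩⟩⟩⟩ <;>
          rw [hrot] at hlen'
        · exfalso; simp at hlen'; omega
        · exfalso; simp at hlen'; omega
        · exfalso; simp at hlen'; omega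
        · exfalso; simp at hlen'; omega
        · exact ⟨x, y, z, w, rest, rfl⟩
      have hx : x = l[i % l.length]'(Nat.mod_lt _ hk0) := by
        have h := List.getElem_rotate l (i % l.length) 0
          (by rw [List.length_rotate]; omega)
        simp only [hl', List.getElem_cons_zero, e0] at h
        exact h
      have hy : y = l[(i + 1) % l.length]'(Nat.mod_lt _ hk0) := by
        have h := List.getElem_rotate l (i % l.length) 1
          (by rw [List.length_rotate]; omega)
        simp only [hl', List.getElem_cons_succ, List.getElem_cons_zero, e1] at h
        exact h
      have hz : z = l[(i + 2) % l.length]'(Nat.mod_lt _ hk0) := by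
        have h := List.getElem_rotate l (i % l.length) 2
          (by rw [List.length_rotate]; omega)
        simp only [hl', List.getElem_cons_succ, List.getElem_cons_zero, e2] at h
        exact h
      have hxy : f x ≠ f y := by rw [hx, hy]; exact ht1
      have hyz : f y ≠ f z := by rw [hy, hz]; exact ht2
      have hxz : f x ≠ f z := by rw [hx, hz]; exact ht3
      have hadj' : ∀ p ∈ pairs (x::y::z::w::rest), f p.1 ≠ f p.2 := by
        rw [← hl']
        intro p hp'
        rw [pairs_rotate] at hp'
        exact hadj p (List.mem_rotate.1 hp')
      have hnod' : ((pairs (x::y::z::w::rest)).map (fun p => c s(p.1, p.2))).Nodup := by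
        rw [← hl', pairs_rotate, List.map_rotate]
        exact List.nodup_rotate.2 hnod
      have hlen' : (x::y::z::w::rest : List V).length ≤ N + 1 := by
        rw [← hl', List.length_rotate]
        omega
      exact step f c N IH x y z w rest hlen' hadj' hnod' hxy hyz hxz


variable {V : Type*}

lemma zip_trunc {β : Type*} : ∀ (l : List V) (m : List β) (l' : List V),
    m.length ≤ l.length → (l ++ l').zip m = l.zip m := by
  intro l
  induction l with
  | nil =>
    intro m l' h
    simp only [List.length_nil, Nat.le_zero, List.length_eq_zero_iff] at h
    simp [h]
  | cons a l ih =>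
    intro m l' h
    cases m with
    | nil => simp
    | cons b m' =>
      simp only [List.cons_append, List.zip_cons_cons, List.cons.injEq, true_and]
      exact ih m' l' (by simpa using h)

lemma walk_edges_eq {G : SimpleGraph V} {u v : V} (w : G.Walk u v) :
    w.edges = (w.support.zip w.support.tail).map (fun p => s(p.1, p.2)) := by
  induction w with
  | nil => simp
  | @cons u v x h p ih =>
    rw [SimpleGraph.Walk.edges_cons, ih, SimpleGraph.Walk.support_cons,
      SimpleGraph.Walk.support_eq_cons p]
    rfl


end RainbowAux


open Finset

/-- The complete `r`-partite graph with parts of sizes `n 0, n 1, …, n (r-1)`. -/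
def Kpartite (r : ℕ) (n : ℕ → ℕ) : SimpleGraph ((i : Fin r) × Fin (n i)) :=
  SimpleGraph.completeMultipartiteGraph fun i : Fin r => Fin (n i)

/-- The edge-coloring `c` contains a rainbow 3-cycle in `G`. -/
def RainbowC3 {V α : Type*} (G : SimpleGraph V) (c : Sym2 V → α) : Prop :=
  ∃ a b d : V, G.Adj a b ∧ G.Adj b d ∧ G.Adj d a ∧
    c s(a, b) ≠ c s(b, d) ∧ c s(b, d) ≠ c s(d, a) ∧ c s(a, b) ≠ c s(d, a)

/-- The edge-coloring `c` contains a rainbow 4-cycle in `G`. -/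
def RainbowC4 {V α : Type*} (G : SimpleGraph V) (c : Sym2 V → α) : Prop :=
  ∃ a b d e : V, G.Adj a b ∧ G.Adj b d ∧ G.Adj d e ∧ G.Adj e a ∧
    a ≠ d ∧ b ≠ e ∧
    c s(a, b) ≠ c s(b, d) ∧ c s(a, b) ≠ c s(d, e) ∧ c s(a, b) ≠ c s(e, a) ∧
    c s(b, d) ≠ c s(d, e) ∧ c s(b, d) ≠ c s(e, a) ∧ c s(d, e) ≠ c s(e, a)

/-- The coloring `c` uses every one of the `k` colors on at least one edge of `G`
(i.e. it uses exactly `k` colors). -/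
def SurjOnEdges {V : Type*} {k : ℕ} (G : SimpleGraph V) (c : Sym2 V → Fin k) : Prop :=
  ∀ i : Fin k, ∃ e ∈ G.edgeSet, c e = i

/-- `G` (a subgraph of an `r`-partite graph) contains a cycle whose vertex set meets
at least three distinct parts. -/
def HasMultipartiteCycle {r : ℕ} {n : ℕ → ℕ}
    (G : SimpleGraph ((i : Fin r) × Fin (n i))) : Prop :=
  ∃ (v : (i : Fin r) × Fin (n i)) (w : G.Walk v v), w.IsCycle ∧
    3 ≤ (w.support.map Sigma.fst).toFinset.card

/-- `G` contains a path on three vertices meeting three distinct parts. -/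
def HasMultipartiteP3 {r : ℕ} {n : ℕ → ℕ}
    (G : SimpleGraph ((i : Fin r) × Fin (n i))) : Prop :=
  ∃ x y z : (i : Fin r) × Fin (n i), G.Adj x y ∧ G.Adj y z ∧
    x.1 ≠ y.1 ∧ y.1 ≠ z.1 ∧ x.1 ≠ z.1

/-- Under the edge-coloring `c`, `G` contains a rainbow cycle whose vertex set meets
at least three distinct parts. -/
def HasRainbowMultipartiteCycle {r : ℕ} {n : ℕ → ℕ} {α : Type*}
    (G : SimpleGraph ((i : Fin r) × Fin (n i)))
    (c : Sym2 ((i : Fin r) × Fin (n i)) → α) : Prop :=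
  ∃ (v : (i : Fin r) × Fin (n i)) (w : G.Walk v v), w.IsCycle ∧
    3 ≤ (w.support.map Sigma.fst).toFinset.card ∧ (w.edges.map c).Nodup

/-- If an edge-coloring of the complete `r`-partite graph has a rainbow multipartite
cycle, then it has a rainbow triangle. -/
theorem rainbow_multipartite_cycle_to_rainbow_C3 (r : ℕ) (n : ℕ → ℕ) (hr : 3 ≤ r)
    (hmono : ∀ i j : ℕ, i ≤ j → j < r → n j ≤ n i)
    (hpos : ∀ i : ℕ, i < r → 1 ≤ n i)
    {α : Type*} (c : Sym2 ((i : Fin r) × Fin (n i)) → α)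
    (h : HasRainbowMultipartiteCycle (Kpartite r n) c) :
    RainbowC3 (Kpartite r n) c := by
  classical
  obtain ⟨v, w, hcyc, hcard, hnodup⟩ := h
  set f : ((i : Fin r) × Fin (n i)) → Fin r := Sigma.fst with hf
  have hsupne : w.support ≠ [] := SimpleGraph.Walk.support_ne_nil w
  have hlen3 : 3 ≤ w.support.length := by
    have h1 := List.toFinset_card_le (w.support.map f)
    rw [List.length_map] at h1
    omega
  obtain ⟨t, ht⟩ : ∃ t, w.support = v :: t := ⟨_, SimpleGraph.Walk.support_eq_cons w⟩
  have htne : t ≠ [] := by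
    intro h0
    rw [h0] at ht
    rw [ht] at hlen3
    simp at hlen3
  have htlast : t.getLast htne = v := by
    have h1 := SimpleGraph.Walk.getLast_support w
    simp only [ht, List.getLast_cons htne] at h1
    exact h1
  have htdec : t.dropLast ++ [v] = t := by
    rw [← htlast]
    exact List.dropLast_concat_getLast htne
  -- the cyclic vertex list
  set l : List ((i : Fin r) × Fin (n i)) := v :: t.dropLast with hl
  have hsupeq : w.support = l ++ [v] := by
    rw [ht, hl, List.cons_append, htdec]
  have hrot : l.rotate 1 = t := by
    rw [hl, List.rotate_cons_succ, List.rotate_zero, htdec]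
  have htail : w.support.tail = t := by rw [ht]; rfl
  have hlenl : t.length ≤ l.length := by
    rw [hl]
    have : t.dropLast.length = t.length - 1 := List.length_dropLast
    simp only [List.length_cons, this]
    have : 0 < t.length := List.length_pos_iff.2 htne
    omega
  have hpairs : RainbowAux.pairs l = w.support.zip w.support.tail := by
    rw [RainbowAux.pairs, hrot, htail, hsupeq, RainbowAux.zip_trunc l t [v] hlenl]
  have hedges : w.edges = (RainbowAux.pairs l).map (fun p => s(p.1, p.2)) := by
    rw [RainbowAux.walk_edges_eq w, hpairs]
  have hadj : ∀ p ∈ RainbowAux.pairs l, f p.1 ≠ f p.2 := by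
    intro p hp
    have h1 : s(p.1, p.2) ∈ w.edges := by
      rw [hedges]
      exact List.mem_map_of_mem hp
    have h2 := w.edges_subset_edgeSet h1
    rw [SimpleGraph.mem_edgeSet] at h2
    exact h2
  have hnod : ((RainbowAux.pairs l).map (fun p => c s(p.1, p.2))).Nodup := by
    rw [hedges, List.map_map] at hnodup
    exact hnodup
  have hcard' : 3 ≤ (l.map f).toFinset.card := by
    have heq : (w.support.map f).toFinset = (l.map f).toFinset := by
      rw [hsupeq, List.map_append, List.toFinset_append]
      apply Finset.union_eq_left.2
      intro a ha
      simp only [List.map_cons, List.map_nil, List.toFinset_cons, List.toFinset_nil,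
        insert_empty_eq, Finset.mem_singleton] at ha
      subst ha
      rw [List.mem_toFinset]
      exact List.mem_map_of_mem (f := f) (by rw [hl]; exact List.mem_cons_self)
    rw [← heq]
    exact hcard
  obtain ⟨a, b, d, hab, hbd, had, hc1, hc2, hc3⟩ :=
    RainbowAux.core f c l.length l le_rfl hadj hnod hcard'
  exact ⟨a, b, d, hab, hbd, fun hh => had hh.symm, hc1, hc2, hc3⟩
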